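/- Suppose c ∈ ℂ^{ℤ_d×ℤ_d} satisfies Tc = vv* for some v ∈ ℂ^d with v_0 ≠ 0. Then the symbols of c satisfy the Riesz-type factorisation |p_j(z)|² = p_0(z)·p_0(ω^j z) for every j ∈ ℤ_d and every complex z with z^d = 1. -/

import Mathlib

open Matrix Complex

/-- `ω = exp(2πi/d)`, a primitive `d`-th root of unity. -/
noncomputable def omegaRoot (d : ℕ) : ℂ := Complex.exp (2 * Real.pi * Complex.I / d)

/-- The cyclic shift matrix `S`, `S_{jk} = δ_{j,k+1}`. -/
def Smat (d : ℕ) [NeZero d] : Matrix (ZMod d) (ZMod d) ℂ :=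
  Matrix.of fun j k => if j = k + 1 then 1 else 0

/-- The modulation matrix `Ω`, `Ω_{jk} = ω^j δ_{jk}`. -/
noncomputable def Omat (d : ℕ) [NeZero d] : Matrix (ZMod d) (ZMod d) ℂ :=
  Matrix.of fun j k => if j = k then omegaRoot d ^ j.val else 0

/-- The reconstruction operator `T`, `Tc = (1/d) Σ_{j,k} c_{jk} (S^j Ω^k)^*`. -/
noncomputable def Trec (d : ℕ) [NeZero d] (c : Matrix (ZMod d) (ZMod d) ℂ) :
    Matrix (ZMod d) (ZMod d) ℂ :=
  (1 / (d : ℂ)) • ∑ j : ZMod d, ∑ k : ZMod d, c j k • (Smat d ^ j.val * Omat d ^ k.val)ᴴ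

/-- The `j`-th symbol of `c`: `p_j(z) = Σ_r c_{-j,r} (ω^j z)^{-r}`. -/
noncomputable def symb (d : ℕ) [NeZero d] (c : Matrix (ZMod d) (ZMod d) ℂ)
    (j : ZMod d) (z : ℂ) : ℂ :=
  ∑ r : ZMod d, c (-j) r * (omegaRoot d ^ j.val * z) ^ (-(r.val : ℤ))

set_option linter.unusedSectionVars false
variable (d : ℕ) [NeZero d]

lemma omega_prim : IsPrimitiveRoot (omegaRoot d) d := by
  simpa [omegaRoot] using Complex.isPrimitiveRoot_exp d (NeZero.ne d)

lemma omega_pow_d : omegaRoot d ^ d = 1 := (omega_prim d).pow_eq_one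

lemma omega_ne_zero : omegaRoot d ≠ 0 := Complex.exp_ne_zero _

lemma omega_conj : (starRingEnd ℂ) (omegaRoot d) = (omegaRoot d)⁻¹ := by
  rw [omegaRoot, ← Complex.exp_conj, ← Complex.exp_neg]
  congr 1
  rw [map_div₀, _root_.map_mul, _root_.map_mul, Complex.conj_I, map_natCast,
    Complex.conj_ofReal, map_ofNat]
  ring

lemma omega_pow_mod (m : ℕ) : omegaRoot d ^ m = omegaRoot d ^ (m % d) := by
  conv_lhs => rw [← Nat.mod_add_div m d]
  rw [pow_add, pow_mul, omega_pow_d, one_pow, mul_one]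

lemma omega_pow_congr {m n : ℕ} (h : (m : ZMod d) = (n : ZMod d)) :
    omegaRoot d ^ m = omegaRoot d ^ n := by
  rw [omega_pow_mod d m, omega_pow_mod d n]
  congr 1
  have := congrArg ZMod.val h
  simpa [ZMod.val_natCast] using this

lemma Smat_pow (n : ℕ) (j k : ZMod d) :
    (Smat d ^ n) j k = if j = k + (n : ZMod d) then 1 else 0 := by
  induction n generalizing k with
  | zero => simp [Matrix.one_apply]
  | succ n ih =>
    rw [pow_succ, Matrix.mul_apply, Finset.sum_eq_single (k + 1)]
    · rw [ih]
      have hc : k + 1 + (n : ZMod d) = k + ((n + 1 : ℕ) : ZMod d) := by push_cast; ring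
      simp [Smat, hc]
    · intro b _ hb; simp [Smat, hb]
    · simp

lemma Omat_pow (n : ℕ) (j k : ZMod d) :
    (Omat d ^ n) j k = if j = k then omegaRoot d ^ (j.val * n) else 0 := by
  induction n with
  | zero => simp [Matrix.one_apply]
  | succ n ih =>
    rw [pow_succ, Matrix.mul_apply, Finset.sum_eq_single k]
    · rw [ih]
      by_cases hjk : j = k
      · subst hjk; simp [Omat, mul_add, pow_add, pow_mul]
      · simp [Omat, hjk]
    · intro b _ hb
      simp [Omat, hb]
    · simp

lemma Trec_apply (c : Matrix (ZMod d) (ZMod d) ℂ) (a b : ZMod d) :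
    Trec d c a b
      = (1 / (d : ℂ)) * ∑ k : ZMod d,
          c (b - a) k * (starRingEnd ℂ) (omegaRoot d ^ (a.val * k.val)) := by
  rw [Trec, Matrix.smul_apply, Matrix.sum_apply]
  rw [smul_eq_mul]
  congr 1
  rw [Finset.sum_eq_single (b - a)]
  · rw [Matrix.sum_apply]
    congr 1
    ext k
    rw [Matrix.smul_apply, Matrix.conjTranspose_apply, Matrix.mul_apply,
      Finset.sum_eq_single a]
    · rw [Smat_pow, Omat_pow]
      have : (((b-a).val : ZMod d)) = b - a := by simp [ZMod.natCast_val, ZMod.cast_id]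
      simp [this, smul_eq_mul]
    · intro m _ hm
      rw [Smat_pow, Omat_pow]
      simp [hm]
    · simp
  · intro j _ hj
    rw [Matrix.sum_apply]
    apply Finset.sum_eq_zero
    intro k _
    rw [Matrix.smul_apply, Matrix.conjTranspose_apply, Matrix.mul_apply,
      Finset.sum_eq_single a]
    · rw [Smat_pow]
      have hne : b ≠ a + j := fun hba => hj (by rw [hba]; ring)
      simp [hne]
    · intro m _ hm
      rw [Smat_pow, Omat_pow]
      simp [hm]
    · simp
  · simp

lemma symb_eq (c : Matrix (ZMod d) (ZMod d) ℂ) (j : ZMod d) (s : ℕ) :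
    symb d c j (omegaRoot d ^ s)
      = d * Trec d c (j + (s : ZMod d)) (s : ZMod d) := by
  have hd0 : (d : ℂ) ≠ 0 := Nat.cast_ne_zero.mpr (NeZero.ne d)
  rw [Trec_apply, ← mul_assoc, mul_one_div_cancel hd0, one_mul, symb]
  have hsub : (s : ZMod d) - (j + (s : ZMod d)) = -j := by ring
  rw [hsub]
  apply Finset.sum_congr rfl
  intro r _
  congr 1
  rw [← pow_add, _root_.zpow_neg, zpow_natCast, ← pow_mul, map_pow, omega_conj, inv_pow]
  congr 1
  apply omega_pow_congr
  push_cast [ZMod.natCast_val, ZMod.cast_id]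
  ring

theorem stmt16 (d : ℕ) [NeZero d] (hd : 2 ≤ d) (c : Matrix (ZMod d) (ZMod d) ℂ)
    (h : ∃ v : ZMod d → ℂ, Trec d c = Matrix.vecMulVec v (star v) ∧ v 0 ≠ 0) :
    ∀ j : ZMod d, ∀ z : ℂ, z ^ d = 1 →
      ((‖symb d c j z‖ : ℂ)) ^ 2
        = symb d c 0 z * symb d c 0 (omegaRoot d ^ j.val * z) := by
  obtain ⟨v, hv, -⟩ := h
  intro j z hz
  obtain ⟨s, hslt, hzs⟩ := (omega_prim d).eq_pow_of_pow_eq_one hz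
  have hTv : ∀ a b : ZMod d, Trec d c a b = v a * (starRingEnd ℂ) (v b) := by
    intro a b
    rw [hv, Matrix.vecMulVec_apply]
    rfl
  have e1 : symb d c j z = d * (v (j + (s : ZMod d)) * (starRingEnd ℂ) (v (s : ZMod d))) := by
    rw [← hzs, symb_eq, hTv]
  have e2 : symb d c 0 z = d * (v (s : ZMod d) * (starRingEnd ℂ) (v (s : ZMod d))) := by
    rw [← hzs, symb_eq, hTv, zero_add]
  have e3 : symb d c 0 (omegaRoot d ^ j.val * z)
      = d * (v (j + (s : ZMod d)) * (starRingEnd ℂ) (v (j + (s : ZMod d)))) := by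
    rw [← hzs, ← pow_add, symb_eq, hTv, zero_add]
    have : (((j.val + s : ℕ)) : ZMod d) = j + (s : ZMod d) := by
      push_cast [ZMod.natCast_val, ZMod.cast_id]
      ring
    rw [this]
  have habs : ((‖symb d c j z‖ : ℂ)) ^ 2
      = symb d c j z * (starRingEnd ℂ) (symb d c j z) := by
    rw [← Complex.ofReal_pow, Complex.sq_norm, Complex.mul_conj]
  rw [habs, e1, e2, e3]
  rw [_root_.map_mul, _root_.map_mul, Complex.conj_conj, map_natCast]
  ring
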